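/- arXiv:2512.21262 — 6 statements merged into one kernel-verified Lean document; each statement's English description precedes it below -/
import Mathlib

section
/- Let f : ℝ → ℂ be continuously differentiable with f ∈ L^p(ℝ), f' ∈ L^p(ℝ) for some 1 ≤ p < ∞, and suppose ‖f'‖_p ≤ σ‖f‖_p for some σ > 0. Then for every h > 0, (h·∑_{k∈ℤ} |f(hk)|^p)^{1/p} ≤ (1 + hσ)·‖f‖_p. -/
open Real MeasureTheory Set
open scoped ENNReal NNReal

lemma pp_key (f : ℝ → ℂ) (hf : ContDiff ℝ 1 f) {a x b : ℝ} (hax : a ≤ x) (hxb : x ≤ b) :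
    ‖f a‖ ≤ ‖f x‖ + ∫ t in a..b, ‖deriv f t‖ := by
  have hd : Continuous (deriv f) := hf.continuous_deriv le_rfl
  have hftc : ∫ t in a..x, deriv f t = f x - f a :=
    intervalIntegral.integral_deriv_eq_sub
      (fun t _ => (hf.differentiable one_ne_zero) t) (hd.intervalIntegrable _ _)
  have h1 : ‖f x - f a‖ ≤ ∫ t in a..x, ‖deriv f t‖ := by
    rw [← hftc]; exact intervalIntegral.norm_integral_le_integral_norm hax
  have h2 : (∫ t in a..x, ‖deriv f t‖) ≤ ∫ t in a..b, ‖deriv f t‖ :=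
    intervalIntegral.integral_mono_interval le_rfl hax hxb
      (Filter.Eventually.of_forall fun t => norm_nonneg _)
      ((hd.norm).intervalIntegrable _ _)
  calc ‖f a‖ = ‖f x - (f x - f a)‖ := by rw [sub_sub_cancel]
    _ ≤ ‖f x‖ + ‖f x - f a‖ := norm_sub_le _ _
    _ ≤ ‖f x‖ + ∫ t in a..b, ‖deriv f t‖ := by linarith

noncomputable def ppβ (f : ℝ → ℂ) (h : ℝ) (k : ℤ) : ℝ≥0∞ :=
  ∫⁻ t in Set.Ioc (h*(k:ℝ)) (h*k+h), (‖deriv f t‖₊ : ℝ≥0∞)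

noncomputable def ppV (f : ℝ → ℂ) (h : ℝ) (x : ℝ) : ℝ≥0∞ := ppβ f h ⌊x/h⌋

theorem plancherel_polya_upper (f : ℝ → ℂ) (p σ h : ℝ)
    (hp : 1 ≤ p) (hσ : 0 < σ) (hh : 0 < h)
    (hf : ContDiff ℝ 1 f)
    (hfp : Integrable (fun x => ‖f x‖ ^ p))
    (hfp' : Integrable (fun x => ‖deriv f x‖ ^ p))
    (hbern : (∫ x : ℝ, ‖deriv f x‖ ^ p) ^ (1/p) ≤ σ * (∫ x : ℝ, ‖f x‖ ^ p) ^ (1/p)) :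
    (h * ∑' k : ℤ, ‖f (h * k)‖ ^ p) ^ (1/p) ≤
      (1 + h * σ) * (∫ x : ℝ, ‖f x‖ ^ p) ^ (1/p) := by
  have hp0 : (0:ℝ) < p := lt_of_lt_of_le one_pos hp
  have hinvp : (0:ℝ) < 1/p := by positivity
  have hd : Continuous (deriv f) := hf.continuous_deriv le_rfl
  have hfc : Continuous f := hf.continuous
  have hFm : Measurable fun x : ℝ => (‖f x‖₊ : ℝ≥0∞) :=
    hfc.measurable.nnnorm.coe_nnreal_ennreal
  have hGm : Measurable fun x : ℝ => (‖deriv f x‖₊ : ℝ≥0∞) :=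
    hd.measurable.nnnorm.coe_nnreal_ennreal
  have hVm : Measurable (ppV f h) := by
    have : Measurable fun x : ℝ => (⌊x/h⌋ : ℤ) := (measurable_id.div_const h).floor
    exact (measurable_from_top (f := ppβ f h)).comp this
  have hnnf : ∀ x : ℝ, (0:ℝ) ≤ ‖f x‖ ^ p := fun x => Real.rpow_nonneg (norm_nonneg _) _
  have hnng : ∀ x : ℝ, (0:ℝ) ≤ ‖deriv f x‖ ^ p := fun x => Real.rpow_nonneg (norm_nonneg _) _
  have ha0 : 0 ≤ ∫ x : ℝ, ‖f x‖ ^ p := integral_nonneg hnnf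
  have hb0 : 0 ≤ ∫ x : ℝ, ‖deriv f x‖ ^ p := integral_nonneg hnng
  -- A and B
  have hAa : (∫⁻ x : ℝ, (‖f x‖₊ : ℝ≥0∞) ^ p) = ENNReal.ofReal (∫ x : ℝ, ‖f x‖ ^ p) := by
    rw [ofReal_integral_eq_lintegral_ofReal hfp (Filter.Eventually.of_forall hnnf)]
    exact lintegral_congr fun x => by
      rw [← ((ofReal_norm _).trans (enorm_eq_nnnorm _)), ← ENNReal.ofReal_rpow_of_nonneg (norm_nonneg _) hp0.le]
  have hBb : (∫⁻ x : ℝ, (‖deriv f x‖₊ : ℝ≥0∞) ^ p) = ENNReal.ofReal (∫ x : ℝ, ‖deriv f x‖ ^ p) := by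
    rw [ofReal_integral_eq_lintegral_ofReal hfp' (Filter.Eventually.of_forall hnng)]
    exact lintegral_congr fun x => by
      rw [← ((ofReal_norm _).trans (enorm_eq_nnnorm _)), ← ENNReal.ofReal_rpow_of_nonneg (norm_nonneg _) hp0.le]
  -- Bernstein in ℝ≥0∞
  have hbernE : (∫⁻ x : ℝ, (‖deriv f x‖₊ : ℝ≥0∞) ^ p) ^ (1/p) ≤
      ENNReal.ofReal σ * (∫⁻ x : ℝ, (‖f x‖₊ : ℝ≥0∞) ^ p) ^ (1/p) := by
    rw [hAa, hBb, ENNReal.ofReal_rpow_of_nonneg hb0 hinvp.le,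
      ENNReal.ofReal_rpow_of_nonneg ha0 hinvp.le, ← ENNReal.ofReal_mul hσ.le]
    exact ENNReal.ofReal_le_ofReal hbern
  -- partitions
  have hIm : ∀ k : ℤ, MeasurableSet (Ico (h*(k:ℝ)) (h*k+h)) := fun k => measurableSet_Ico
  have hU : ⋃ k : ℤ, Ico (h*(k:ℝ)) (h*k+h) = univ := by
    rw [← iUnion_Ico_zsmul hh]
    exact iUnion_congr fun k => by congr 1 <;> push_cast [zsmul_eq_mul] <;> ring
  have hDisj : Pairwise (Function.onFun Disjoint fun k : ℤ => Ico (h*(k:ℝ)) (h*k+h)) := by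
    have H := pairwise_disjoint_Ico_zsmul (b := h) (α := ℝ)
    convert H using 3 with k
    congr 1 <;> push_cast [zsmul_eq_mul] <;> ring
  have hUIoc : ⋃ k : ℤ, Ioc (h*(k:ℝ)) (h*k+h) = univ := by
    rw [← iUnion_Ioc_zsmul hh]
    exact iUnion_congr fun k => by congr 1 <;> push_cast [zsmul_eq_mul] <;> ring
  have hDisjIoc : Pairwise (Function.onFun Disjoint fun k : ℤ => Ioc (h*(k:ℝ)) (h*k+h)) := by
    have H := pairwise_disjoint_Ioc_zsmul (b := h) (α := ℝ)
    convert H using 3 with k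
    congr 1 <;> push_cast [zsmul_eq_mul] <;> ring
  have hpart : ∀ W : ℝ → ℝ≥0∞,
      ∫⁻ x : ℝ, W x = ∑' k : ℤ, ∫⁻ x in Ico (h*(k:ℝ)) (h*k+h), W x := by
    intro W
    rw [← setLIntegral_univ, ← hU, lintegral_iUnion hIm hDisj]
  have hpartIoc : ∀ W : ℝ → ℝ≥0∞,
      ∫⁻ x : ℝ, W x = ∑' k : ℤ, ∫⁻ x in Ioc (h*(k:ℝ)) (h*k+h), W x := by
    intro W
    rw [← setLIntegral_univ, ← hUIoc, lintegral_iUnion (fun k => measurableSet_Ioc) hDisjIoc]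
  have hmes : ∀ k : ℤ, volume (Ico (h*(k:ℝ)) (h*k+h)) = ENNReal.ofReal h := by
    intro k; rw [Real.volume_Ico]; congr 1; ring
  have hmesIoc : ∀ k : ℤ, volume (Ioc (h*(k:ℝ)) (h*k+h)) = ENNReal.ofReal h := by
    intro k; rw [Real.volume_Ioc]; congr 1; ring
  have hfloor : ∀ (k : ℤ) (x : ℝ), x ∈ Ico (h*(k:ℝ)) (h*k+h) → ⌊x/h⌋ = k := by
    intro k x hx
    rw [Int.floor_eq_iff]
    constructor
    · rw [le_div_iff₀ hh]; linarith [hx.1]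
    · rw [div_lt_iff₀ hh]; push_cast; linarith [hx.2]
  -- β as ofReal of interval integral
  have hβeq : ∀ k : ℤ, ppβ f h k =
      ENNReal.ofReal (∫ t in (h*(k:ℝ))..(h*k+h), ‖deriv f t‖) := by
    intro k
    rw [intervalIntegral.integral_of_le (by linarith : h*(k:ℝ) ≤ h*k+h),
      ofReal_integral_eq_lintegral_ofReal
        ((hd.norm.integrableOn_Icc).mono_set Ioc_subset_Icc_self)
        (Filter.Eventually.of_forall fun t => norm_nonneg _)]
    exact lintegral_congr fun t => ((ofReal_norm _).trans (enorm_eq_nnnorm _)).symm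
  -- pointwise bound
  have hpt : ∀ (k : ℤ) (x : ℝ), x ∈ Ico (h*(k:ℝ)) (h*k+h) →
      (‖f (h*(k:ℝ))‖₊ : ℝ≥0∞) ^ p ≤ ((‖f x‖₊ : ℝ≥0∞) + ppV f h x) ^ p := by
    intro k x hx
    apply ENNReal.rpow_le_rpow _ hp0.le
    rw [ppV, hfloor k x hx, hβeq k, ← ((ofReal_norm _).trans (enorm_eq_nnnorm _)), ← ((ofReal_norm _).trans (enorm_eq_nnnorm _)),
      ← ENNReal.ofReal_add (norm_nonneg _)
        (intervalIntegral.integral_nonneg (by linarith) fun t _ => norm_nonneg _)]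
    exact ENNReal.ofReal_le_ofReal (pp_key f hf hx.1 hx.2.le)
  -- step sum ≤ integral of (F+V)^p
  have hS4 : ENNReal.ofReal h * (∑' k : ℤ, (‖f (h*(k:ℝ))‖₊ : ℝ≥0∞) ^ p) ≤
      ∫⁻ x : ℝ, ((‖f x‖₊ : ℝ≥0∞) + ppV f h x) ^ p := by
    rw [hpart (fun x => ((‖f x‖₊ : ℝ≥0∞) + ppV f h x) ^ p), ← ENNReal.tsum_mul_left]
    refine ENNReal.tsum_le_tsum fun k => ?_
    calc ENNReal.ofReal h * (‖f (h*(k:ℝ))‖₊ : ℝ≥0∞) ^ p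
        = ∫⁻ _ in Ico (h*(k:ℝ)) (h*k+h), (‖f (h*(k:ℝ))‖₊ : ℝ≥0∞) ^ p := by
          rw [setLIntegral_const, hmes k, mul_comm]
      _ ≤ ∫⁻ x in Ico (h*(k:ℝ)) (h*k+h), ((‖f x‖₊ : ℝ≥0∞) + ppV f h x) ^ p :=
          setLIntegral_mono ((hFm.add hVm).pow_const _) (hpt k)
  -- Minkowski
  have hMink : (∫⁻ x : ℝ, ((‖f x‖₊ : ℝ≥0∞) + ppV f h x) ^ p) ^ (1/p) ≤
      (∫⁻ x : ℝ, (‖f x‖₊ : ℝ≥0∞) ^ p) ^ (1/p) + (∫⁻ x : ℝ, ppV f h x ^ p) ^ (1/p) :=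
    ENNReal.lintegral_Lp_add_le hFm.aemeasurable hVm.aemeasurable hp
  -- compute ∫⁻ V^p
  have hVint : (∫⁻ x : ℝ, ppV f h x ^ p) = ∑' k : ℤ, ENNReal.ofReal h * ppβ f h k ^ p := by
    rw [hpart (fun x => ppV f h x ^ p)]
    refine tsum_congr fun k => ?_
    rw [setLIntegral_congr_fun (hIm k)
      (fun x hx => by rw [ppV, hfloor k x hx]),
      setLIntegral_const, hmes k, mul_comm]
  -- Hölder on each interval
  have hHolder : ∀ k : ℤ, ppβ f h k ≤
      (∫⁻ t in Ioc (h*(k:ℝ)) (h*k+h), (‖deriv f t‖₊ : ℝ≥0∞) ^ p) ^ (1/p)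
        * ENNReal.ofReal h ^ (1 - 1/p) := by
    intro k
    rcases eq_or_lt_of_le hp with hp1 | hp1
    · simp only [← hp1, sub_self, ENNReal.rpow_zero, mul_one, ENNReal.rpow_one, one_div,
        inv_one, ppβ]
      exact le_refl _
    · have hpq : p.HolderConjugate (p/(p-1)) := Real.HolderConjugate.conjExponent hp1
      have H := ENNReal.lintegral_mul_le_Lp_mul_Lq
        (volume.restrict (Ioc (h*(k:ℝ)) (h*k+h))) hpq hGm.aemeasurable
        (aemeasurable_const (b := (1:ℝ≥0∞)))
      simp only [Pi.mul_apply, mul_one, ENNReal.one_rpow, lintegral_const,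
        Measure.restrict_apply MeasurableSet.univ, univ_inter, hmesIoc k] at H
      rw [ppβ]
      refine H.trans (le_of_eq ?_)
      rw [one_mul, one_div_div, sub_div, div_self hp0.ne']
  have hofh0 : ENNReal.ofReal h ≠ 0 := (ENNReal.ofReal_pos.mpr hh).ne'
  have hVp : (∫⁻ x : ℝ, ppV f h x ^ p) ^ (1/p) ≤
      ENNReal.ofReal h * (∫⁻ x : ℝ, (‖deriv f x‖₊ : ℝ≥0∞) ^ p) ^ (1/p) := by
    have h1 : (∫⁻ x : ℝ, ppV f h x ^ p) ≤
        ENNReal.ofReal h ^ p * ∫⁻ x : ℝ, (‖deriv f x‖₊ : ℝ≥0∞) ^ p := by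
      rw [hVint, hpartIoc (fun x => (‖deriv f x‖₊ : ℝ≥0∞) ^ p), ← ENNReal.tsum_mul_left]
      refine ENNReal.tsum_le_tsum fun k => ?_
      have h2 : ppβ f h k ^ p ≤
          (∫⁻ t in Ioc (h*(k:ℝ)) (h*k+h), (‖deriv f t‖₊ : ℝ≥0∞) ^ p)
            * ENNReal.ofReal h ^ (p - 1) := by
        calc ppβ f h k ^ p
            ≤ ((∫⁻ t in Ioc (h*(k:ℝ)) (h*k+h), (‖deriv f t‖₊ : ℝ≥0∞) ^ p) ^ (1/p)
              * ENNReal.ofReal h ^ (1 - 1/p)) ^ p := ENNReal.rpow_le_rpow (hHolder k) hp0.le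
          _ = _ := by
              rw [ENNReal.mul_rpow_of_nonneg _ _ hp0.le, ← ENNReal.rpow_mul,
                ← ENNReal.rpow_mul, one_div_mul_cancel hp0.ne', ENNReal.rpow_one]
              congr 2
              field_simp
      calc ENNReal.ofReal h * ppβ f h k ^ p
          ≤ ENNReal.ofReal h * ((∫⁻ t in Ioc (h*(k:ℝ)) (h*k+h), (‖deriv f t‖₊ : ℝ≥0∞) ^ p)
              * ENNReal.ofReal h ^ (p - 1)) := mul_le_mul_right h2 _
        _ = (ENNReal.ofReal h * ENNReal.ofReal h ^ (p-1))
              * ∫⁻ t in Ioc (h*(k:ℝ)) (h*k+h), (‖deriv f t‖₊ : ℝ≥0∞) ^ p := by ring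
        _ = ENNReal.ofReal h ^ p
              * ∫⁻ t in Ioc (h*(k:ℝ)) (h*k+h), (‖deriv f t‖₊ : ℝ≥0∞) ^ p := by
            congr 1
            calc ENNReal.ofReal h * ENNReal.ofReal h ^ (p-1)
                = ENNReal.ofReal h ^ (1:ℝ) * ENNReal.ofReal h ^ (p-1) := by
                  rw [ENNReal.rpow_one]
              _ = ENNReal.ofReal h ^ (1 + (p-1)) :=
                  (ENNReal.rpow_add _ _ hofh0 ENNReal.ofReal_ne_top).symm
              _ = ENNReal.ofReal h ^ p := by ring_nf
    calc (∫⁻ x : ℝ, ppV f h x ^ p) ^ (1/p)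
        ≤ (ENNReal.ofReal h ^ p * ∫⁻ x : ℝ, (‖deriv f x‖₊ : ℝ≥0∞) ^ p) ^ (1/p) :=
          ENNReal.rpow_le_rpow h1 hinvp.le
      _ = ENNReal.ofReal h * (∫⁻ x : ℝ, (‖deriv f x‖₊ : ℝ≥0∞) ^ p) ^ (1/p) := by
          rw [ENNReal.mul_rpow_of_nonneg _ _ hinvp.le, ← ENNReal.rpow_mul,
            mul_one_div, div_self hp0.ne', ENNReal.rpow_one]
  -- final ENNReal inequality
  have hfinal : (ENNReal.ofReal h * ∑' k : ℤ, (‖f (h*(k:ℝ))‖₊ : ℝ≥0∞) ^ p) ^ (1/p) ≤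
      ENNReal.ofReal (1 + h * σ) * (∫⁻ x : ℝ, (‖f x‖₊ : ℝ≥0∞) ^ p) ^ (1/p) := by
    calc (ENNReal.ofReal h * ∑' k : ℤ, (‖f (h*(k:ℝ))‖₊ : ℝ≥0∞) ^ p) ^ (1/p)
        ≤ (∫⁻ x : ℝ, ((‖f x‖₊ : ℝ≥0∞) + ppV f h x) ^ p) ^ (1/p) :=
          ENNReal.rpow_le_rpow hS4 hinvp.le
      _ ≤ (∫⁻ x : ℝ, (‖f x‖₊ : ℝ≥0∞) ^ p) ^ (1/p) + (∫⁻ x : ℝ, ppV f h x ^ p) ^ (1/p) := hMink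
      _ ≤ (∫⁻ x : ℝ, (‖f x‖₊ : ℝ≥0∞) ^ p) ^ (1/p) +
            ENNReal.ofReal h * (ENNReal.ofReal σ * (∫⁻ x : ℝ, (‖f x‖₊ : ℝ≥0∞) ^ p) ^ (1/p)) :=
          add_le_add_right (hVp.trans (mul_le_mul_right hbernE _)) _
      _ = (1 + ENNReal.ofReal h * ENNReal.ofReal σ) * (∫⁻ x : ℝ, (‖f x‖₊ : ℝ≥0∞) ^ p) ^ (1/p) := by
          ring
      _ = ENNReal.ofReal (1 + h * σ) * (∫⁻ x : ℝ, (‖f x‖₊ : ℝ≥0∞) ^ p) ^ (1/p) := by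
          rw [← ENNReal.ofReal_mul hh.le,
            ENNReal.ofReal_add zero_le_one (by positivity), ENNReal.ofReal_one]
  -- finiteness
  have hRfin : ENNReal.ofReal (1 + h * σ) * (∫⁻ x : ℝ, (‖f x‖₊ : ℝ≥0∞) ^ p) ^ (1/p) ≠ ⊤ :=
    ENNReal.mul_ne_top ENNReal.ofReal_ne_top
      (ENNReal.rpow_lt_top_of_nonneg hinvp.le (by rw [hAa]; exact ENNReal.ofReal_ne_top)).ne
  have hTfin : (∑' k : ℤ, (‖f (h*(k:ℝ))‖₊ : ℝ≥0∞) ^ p) ≠ ⊤ := by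
    intro hTt
    apply hRfin
    refine top_le_iff.mp (le_trans (le_of_eq ?_) hfinal)
    rw [hTt, ENNReal.mul_top hofh0, ENNReal.top_rpow_of_pos hinvp]
  -- back to ℝ
  have hsum : ∑' k : ℤ, ‖f (h*(k:ℝ))‖ ^ p = (∑' k : ℤ, (‖f (h*(k:ℝ))‖₊ : ℝ≥0∞) ^ p).toReal := by
    rw [ENNReal.tsum_toReal_eq
      (fun k => (ENNReal.rpow_lt_top_of_nonneg hp0.le ENNReal.coe_ne_top).ne)]
    refine tsum_congr fun k => ?_
    rw [← ENNReal.toReal_rpow, ENNReal.coe_toReal, coe_nnnorm]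
  have hLHS : (h * ∑' k : ℤ, ‖f (h*(k:ℝ))‖ ^ p) ^ (1/p) =
      ((ENNReal.ofReal h * ∑' k : ℤ, (‖f (h*(k:ℝ))‖₊ : ℝ≥0∞) ^ p) ^ (1/p)).toReal := by
    rw [← ENNReal.toReal_rpow, ENNReal.toReal_mul, ENNReal.toReal_ofReal hh.le, hsum]
  have hRHS : (1 + h * σ) * (∫ x : ℝ, ‖f x‖ ^ p) ^ (1/p) =
      (ENNReal.ofReal (1 + h * σ) * (∫⁻ x : ℝ, (‖f x‖₊ : ℝ≥0∞) ^ p) ^ (1/p)).toReal := by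
    rw [ENNReal.toReal_mul, ENNReal.toReal_ofReal (by positivity), ← ENNReal.toReal_rpow, hAa,
      ENNReal.toReal_ofReal ha0]
  rw [hLHS, hRHS]
  exact ENNReal.toReal_mono hRfin hfinal
end

section
/- Let f : ℝ → ℂ satisfy: for some fixed h > 0 and all x ∈ ℝ, (h·∑_{k∈ℤ}|f(x - hk)|^p)^{1/p} ≤ (1+hσ)‖f‖_p with 1 ≤ p ≤ q < ∞. Then ‖f‖_q ≤ h^{1/q - 1/p}(1 + hσ)‖f‖_p, using the fact that the ℓ^q norm of a sequence is at most its ℓ^p norm when p ≤ q. -/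
open Real MeasureTheory
open Set
open scoped ENNReal NNReal

theorem bernstein_embedding (f : ℝ → ℂ) (p q σ h : ℝ)
    (hp : 1 ≤ p) (hpq : p ≤ q) (hσ : 0 < σ) (hh : 0 < h)
    (hf : Continuous f)
    (hfp : Integrable (fun x => ‖f x‖ ^ p))
    (hfq : Integrable (fun x => ‖f x‖ ^ q))
    (hPP : ∀ x : ℝ,
      (h * ∑' k : ℤ, ‖f (x - h * k)‖ ^ p) ^ (1/p) ≤
        (1 + h * σ) * (∫ x : ℝ, ‖f x‖ ^ p) ^ (1/p)) :
    (∫ x : ℝ, ‖f x‖ ^ q) ^ (1/q) ≤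
      h ^ (1/q - 1/p) * (1 + h * σ) * (∫ x : ℝ, ‖f x‖ ^ p) ^ (1/p) := by
  have hp0 : 0 < p := lt_of_lt_of_le one_pos hp
  have hq0 : 0 < q := lt_of_lt_of_le hp0 hpq
  set A : ℝ := ∫ x : ℝ, ‖f x‖ ^ p with hA
  set B : ℝ := ∫ x : ℝ, ‖f x‖ ^ q with hB
  have hA0 : 0 ≤ A := integral_nonneg fun x => Real.rpow_nonneg (norm_nonneg _) _
  have hB0 : 0 ≤ B := integral_nonneg fun x => Real.rpow_nonneg (norm_nonneg _) _
  set C : ℝ := (1 + h * σ) * A ^ (1/p) with hC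
  have hC0 : 0 ≤ C := by positivity
  -- measurable ennreal functions
  set F : ℝ → ℝ≥0∞ := fun x => (‖f x‖₊ : ℝ≥0∞) with hF
  have hFm : Measurable F := hf.measurable.nnnorm.coe_nnreal_ennreal
  -- step 1 : lintegrals
  have key : ∀ r : ℝ, 0 < r → Integrable (fun x => ‖f x‖ ^ r) →
      ∫⁻ x, F x ^ r = ENNReal.ofReal (∫ x : ℝ, ‖f x‖ ^ r) := by
    intro r hr hint
    rw [MeasureTheory.ofReal_integral_eq_lintegral_ofReal hint
      (Filter.Eventually.of_forall fun x => Real.rpow_nonneg (norm_nonneg _) _)]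
    refine lintegral_congr fun x => ?_
    rw [← ENNReal.ofReal_rpow_of_nonneg (norm_nonneg _) hr.le, hF,
      ofReal_norm, enorm_eq_nnnorm]
  -- an equivalence between ℤ and zmultiples h
  have hinj : Function.Injective (fun k : ℤ => k • h) := (zsmul_left_strictMono hh).injective
  let e : ℤ ≃ AddSubgroup.zmultiples h :=
    Equiv.ofBijective (fun k => ⟨k • h, AddSubgroup.zsmul_mem_zmultiples h k⟩)
      ⟨fun a b hab => hinj (by simpa using congrArg Subtype.val hab),
       fun g => by
        obtain ⟨k, hk⟩ := AddSubgroup.mem_zmultiples_iff.mp g.2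
        exact ⟨k, Subtype.ext hk⟩⟩
  -- periodization
  have period : ∀ r : ℝ, ∫⁻ x, F x ^ r =
      ∫⁻ x in Ioc (0:ℝ) (0 + h), ∑' k : ℤ, F (x - h * k) ^ r := by
    intro r
    have hmeas : ∀ k : ℤ, Measurable fun x : ℝ => F (x - h * k) ^ r := by
      intro k
      exact (hFm.comp (measurable_id.sub_const _)).pow_const _
    have hmg : ∀ g : AddSubgroup.zmultiples h,
        AEMeasurable (fun x : ℝ => F (g +ᵥ x) ^ r)
          (volume.restrict (Ioc (0:ℝ) (0 + h))) := fun g =>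
      ((hFm.comp (measurable_const_vadd g)).pow_const r).aemeasurable
    rw [(isAddFundamentalDomain_Ioc hh 0 volume).lintegral_eq_tsum'' (fun x => F x ^ r),
      ← lintegral_tsum hmg]
    refine setLIntegral_congr_fun measurableSet_Ioc (fun x _ => ?_)
    rw [← e.tsum_eq, ← (Equiv.neg ℤ).tsum_eq]
    refine tsum_congr fun k => ?_
    refine congrArg (fun y => F y ^ r) ?_
    show ((-k : ℤ) • h : ℝ) + x = x - h * k
    rw [zsmul_eq_mul]
    push_cast
    ring
  set s : Set ℝ := Ioc (0:ℝ) (0 + h) with hs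
  set Sp : ℝ → ℝ≥0∞ := fun x => ∑' k : ℤ, F (x - h * k) ^ p with hSp
  set Sq : ℝ → ℝ≥0∞ := fun x => ∑' k : ℤ, F (x - h * k) ^ q with hSq
  have hIp : ∫⁻ x in s, Sp x = ENNReal.ofReal A := (period p).symm.trans (key p hp0 hfp)
  have hIq : ∫⁻ x in s, Sq x = ENNReal.ofReal B := (period q).symm.trans (key q hq0 hfq)
  have hSpm : Measurable Sp :=
    Measurable.ennreal_tsum fun k => (hFm.comp (measurable_id.sub_const _)).pow_const _
  have hfin : ∀ᵐ x ∂(volume.restrict s), Sp x < ⊤ :=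
    ae_lt_top hSpm (by rw [hIp]; exact ENNReal.ofReal_ne_top)
  set K : ℝ≥0∞ := ENNReal.ofReal (C ^ p / h) with hK
  -- pointwise bound
  have hbound : ∀ x : ℝ, Sp x < ⊤ → Sq x ≤ K ^ (q / p) := by
    intro x hx
    -- identify real tsum with toReal of Sp
    have hterm : ∀ k : ℤ, (F (x - h * k) ^ p).toReal = ‖f (x - h * k)‖ ^ p := by
      intro k
      rw [← ENNReal.toReal_rpow, ENNReal.coe_toReal, coe_nnnorm]
    have htsum : (Sp x).toReal = ∑' k : ℤ, ‖f (x - h * k)‖ ^ p := by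
      rw [hSp, ENNReal.tsum_toReal_eq
        (fun k => ENNReal.rpow_ne_top_of_nonneg hp0.le ENNReal.coe_ne_top)]
      exact tsum_congr hterm
    -- from hPP
    have h1 : 0 ≤ h * (Sp x).toReal := by positivity
    have h2 : h * (Sp x).toReal ≤ C ^ p := by
      have := Real.rpow_le_rpow (Real.rpow_nonneg h1 _) (htsum ▸ hPP x) hp0.le
      rwa [← Real.rpow_mul h1, one_div, inv_mul_cancel₀ (ne_of_gt hp0),
        Real.rpow_one] at this
    have hSpK : Sp x ≤ K := by
      rw [← ENNReal.ofReal_toReal hx.ne, hK]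
      exact ENNReal.ofReal_le_ofReal ((le_div_iff₀ hh).mpr (by linarith [h2]))
    -- per-term bound
    have hterm2 : ∀ k : ℤ, F (x - h * k) ^ q ≤ K ^ ((q - p) / p) * F (x - h * k) ^ p := by
      intro k
      have hle : F (x - h * k) ^ p ≤ K := le_trans (ENNReal.le_tsum k) hSpK
      have hle2 : F (x - h * k) ≤ K ^ (1 / p) := by
        have := ENNReal.rpow_le_rpow hle (by positivity : (0:ℝ) ≤ 1 / p)
        rwa [← ENNReal.rpow_mul, mul_one_div, div_self (ne_of_gt hp0),
          ENNReal.rpow_one] at this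
      calc F (x - h * k) ^ q = F (x - h * k) ^ (q - p) * F (x - h * k) ^ p := by
            rw [← ENNReal.rpow_add_of_nonneg _ _ (by linarith) hp0.le, sub_add_cancel]
        _ ≤ (K ^ (1 / p)) ^ (q - p) * F (x - h * k) ^ p :=
            mul_le_mul_left (ENNReal.rpow_le_rpow hle2 (by linarith)) _
        _ = K ^ ((q - p) / p) * F (x - h * k) ^ p := by
            rw [← ENNReal.rpow_mul, one_div_mul_eq_div]
    calc Sq x ≤ ∑' k : ℤ, K ^ ((q - p) / p) * F (x - h * k) ^ p :=
          ENNReal.tsum_le_tsum hterm2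
      _ = K ^ ((q - p) / p) * Sp x := ENNReal.tsum_mul_left
      _ ≤ K ^ ((q - p) / p) * K := by gcongr
      _ = K ^ (q / p) := by
          have e0 : (q - p) / p + 1 = q / p := by field_simp; ring
          rw [← e0, ENNReal.rpow_add_of_nonneg _ _
            (div_nonneg (by linarith) hp0.le) zero_le_one, ENNReal.rpow_one]
  -- integrate the bound
  have hBK : ENNReal.ofReal B ≤ K ^ (q / p) * ENNReal.ofReal h := by
    rw [← hIq]
    calc ∫⁻ x in s, Sq x ≤ ∫⁻ _ in s, K ^ (q / p) :=
          lintegral_mono_ae (hfin.mono fun x hx => hbound x hx)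
      _ = K ^ (q / p) * ENNReal.ofReal h := by
          rw [setLIntegral_const, hs, Real.volume_Ioc]
          norm_num
  have hCph : 0 ≤ C ^ p / h := by positivity
  have hBle : B ≤ (C ^ p / h) ^ (q / p) * h := by
    have : ENNReal.ofReal B ≤ ENNReal.ofReal ((C ^ p / h) ^ (q / p) * h) := by
      rw [ENNReal.ofReal_mul (by positivity), ← ENNReal.ofReal_rpow_of_nonneg hCph
        (by positivity : (0:ℝ) ≤ q / p)]
      exact hBK
    rwa [ENNReal.ofReal_le_ofReal_iff (by positivity)] at this
  -- final computation
  have hEq : ((C ^ p / h) ^ (q / p) * h) ^ (1 / q) = h ^ (1/q - 1/p) * C := by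
    have e1 : q / p * (1 / q) = 1 / p := by
      rw [div_mul_div_comm, mul_one, mul_comm p q, ← div_div,
        div_self (ne_of_gt hq0), one_div]
    have e2 : (C ^ p) ^ (1 / p) = C := by
      rw [← Real.rpow_mul hC0, mul_one_div, div_self (ne_of_gt hp0), Real.rpow_one]
    rw [Real.mul_rpow (by positivity) hh.le, ← Real.rpow_mul hCph, e1,
      Real.div_rpow (by positivity) hh.le, e2, Real.rpow_sub hh]
    ring
  calc B ^ (1/q) ≤ ((C ^ p / h) ^ (q / p) * h) ^ (1 / q) :=
        Real.rpow_le_rpow hB0 hBle (by positivity)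
    _ = h ^ (1/q - 1/p) * C := hEq
    _ = h ^ (1/q - 1/p) * (1 + h * σ) * A ^ (1/p) := by rw [hC]; ring
end

section
/- For every m ∈ ℕ and x ≠ 0, the m-th derivative of sinc(x) = sin(πx)/(πx) is given by sinc^{(m)}(x) = ((-1)^m m!)/(π x^{m+1}) · ∑_{j=0}^{m} sin(πx + jπ/2)·(-1)^j (πx)^j / j!. -/
open Real

noncomputable def sinc (x : ℝ) : ℝ := if x = 0 then 1 else Real.sin (π * x) / (π * x)

noncomputable def Ssum (m : ℕ) (x : ℝ) : ℝ :=
  ∑ j ∈ Finset.range (m + 1),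
    Real.sin (π * x + j * π / 2) * ((-1 : ℝ) ^ j * (π * x) ^ j / j.factorial)

lemma hasDerivAt_Ssum (m : ℕ) (x : ℝ) :
    HasDerivAt (Ssum m)
      (π * Real.sin (π * x + (m + 1) * π / 2) * ((-1 : ℝ) ^ m * (π * x) ^ m / m.factorial)) x := by
  set u : ℕ → ℝ := fun j =>
    match j with
    | 0 => 0
    | (k + 1) => π * Real.sin (π * x + (k + 1) * π / 2) * ((-1 : ℝ) ^ k * (π * x) ^ k / k.factorial)
    with hu
  have hterm : ∀ j : ℕ, HasDerivAt
      (fun y => Real.sin (π * y + j * π / 2) * ((-1 : ℝ) ^ j * (π * y) ^ j / j.factorial))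
      (u (j + 1) - u j) x := by
    intro j
    have hlin : HasDerivAt (fun y : ℝ => π * y + (j : ℝ) * π / 2) π x := by
      simpa using ((hasDerivAt_id x).const_mul π).add_const ((j : ℝ) * π / 2)
    have h1 : HasDerivAt (fun y => Real.sin (π * y + j * π / 2))
        (Real.cos (π * x + j * π / 2) * π) x :=
      (Real.hasDerivAt_sin _).comp x hlin
    have hpy : HasDerivAt (fun y : ℝ => π * y) π x := by
      simpa using (hasDerivAt_id x).const_mul π
    have h2 : HasDerivAt (fun y => (-1 : ℝ) ^ j * (π * y) ^ j / j.factorial)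
        ((-1 : ℝ) ^ j * ((j : ℝ) * (π * x) ^ (j - 1) * π) / j.factorial) x := by
      simpa [mul_comm, mul_assoc] using (((hpy.pow j).const_mul ((-1:ℝ)^j)).div_const (j.factorial : ℝ))
    have h : HasDerivAt (fun y => Real.sin (π * y + j * π / 2) * ((-1 : ℝ) ^ j * (π * y) ^ j / j.factorial)) _ x := h1.mul h2
    convert h using 1
    match j with
    | 0 => simp [hu, Real.sin_add_pi_div_two]; ring
    | (k + 1) =>
      have hc : π * x + ((k:ℝ) + 1 + 1) * π / 2 = (π * x + ((k:ℝ) + 1) * π / 2) + π / 2 := by ring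
      simp only [hu]
      push_cast
      rw [hc, Real.sin_add_pi_div_two]
      have hk : (Nat.factorial (k+1) : ℝ) = (k+1) * Nat.factorial k := by push_cast [Nat.factorial_succ]; ring
      field_simp [hk, Nat.factorial_ne_zero]
      rw [hk]; ring
  have hsum : HasDerivAt (fun y => ∑ j ∈ Finset.range (m + 1), Real.sin (π * y + j * π / 2) * ((-1 : ℝ) ^ j * (π * y) ^ j / j.factorial)) (∑ j ∈ Finset.range (m + 1), (u (j + 1) - u j)) x := HasDerivAt.fun_sum (fun j (_ : j ∈ Finset.range (m + 1)) => hterm j)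
  have htel : ∑ j ∈ Finset.range (m + 1), (u (j + 1) - u j) = u (m + 1) - u 0 :=
    Finset.sum_range_sub u (m + 1)
  rw [htel] at hsum
  delta Ssum; simpa [hu] using hsum

lemma key : ∀ (m : ℕ) (x : ℝ), x ≠ 0 →
    iteratedDeriv m _root_.sinc x =
      ((-1 : ℝ) ^ m * m.factorial) / (π * x ^ (m + 1)) * Ssum m x := by
  intro m
  induction m with
  | zero =>
    intro x hx
    have : sin (π * x) / (π * x) = x⁻¹ * π⁻¹ * sin (π * x) := by
      rw [div_eq_mul_inv, mul_inv]; ring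
    simp [_root_.sinc, Ssum, hx, iteratedDeriv_zero, this]
  | succ m ih =>
    intro x hx
    have hπ : π ≠ 0 := Real.pi_ne_zero
    have hne : π * x ^ (m + 1) ≠ 0 := mul_ne_zero hπ (pow_ne_zero _ hx)
    have hev : iteratedDeriv m _root_.sinc =ᶠ[nhds x]
        (fun y => ((-1 : ℝ) ^ m * m.factorial) / (π * y ^ (m + 1)) * Ssum m y) := by
      filter_upwards [IsOpen.mem_nhds isOpen_compl_singleton hx] with y hy
      exact ih y hy
    have hpow : HasDerivAt (fun y : ℝ => π * y ^ (m + 1)) (π * ((m + 1) * x ^ m)) x := by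
      simpa using (hasDerivAt_pow (m + 1) x).const_mul π
    have hinv := hpow.inv hne
    have hprod := (hinv.mul (hasDerivAt_Ssum m x)).const_mul ((-1 : ℝ) ^ m * m.factorial)
    have hG : HasDerivAt
        (fun y => ((-1 : ℝ) ^ m * m.factorial) / (π * y ^ (m + 1)) * Ssum m y)
        (((-1 : ℝ) ^ m * m.factorial) *
          (-(π * ((m + 1) * x ^ m)) / (π * x ^ (m + 1)) ^ 2 * Ssum m x +
            (π * x ^ (m + 1))⁻¹ *
              (π * Real.sin (π * x + (m + 1) * π / 2) *
                ((-1 : ℝ) ^ m * (π * x) ^ m / m.factorial)))) x := by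
      simpa [div_eq_mul_inv, mul_assoc] using hprod
    rw [iteratedDeriv_succ, hev.deriv_eq, hG.deriv]
    have hSsucc : Ssum (m + 1) x = Ssum m x +
        Real.sin (π * x + (m + 1) * π / 2) *
          ((-1 : ℝ) ^ (m + 1) * (π * x) ^ (m + 1) / (m + 1).factorial) := by
      simp [Ssum, Finset.sum_range_succ]
    rw [hSsucc]
    have hfac : ((m + 1).factorial : ℝ) = (m + 1) * m.factorial := by
      push_cast [Nat.factorial_succ]; ring
    have hmf : (m.factorial : ℝ) ≠ 0 := Nat.cast_ne_zero.mpr (Nat.factorial_ne_zero m)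
    push_cast [hfac]
    field_simp
    ring

theorem sinc_iteratedDeriv (m : ℕ) (x : ℝ) (hx : x ≠ 0) :
    iteratedDeriv m _root_.sinc x =
      ((-1 : ℝ) ^ m * m.factorial) / (π * x ^ (m + 1)) *
        ∑ j ∈ Finset.range (m + 1),
          Real.sin (π * x + j * π / 2) * ((-1 : ℝ) ^ j * (π * x) ^ j / j.factorial) := by
  simpa [Ssum] using key m x hx
end

section
/- For every k ∈ ℤ and m ∈ ℕ, (2m-1)·sinc^{(2m-2)}(1/2 - k) = (k - 1/2)·sinc^{(2m-1)}(1/2 - k). -/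
open Real Topology Filter

/-- The smooth (away from 0) representative of sinc. -/
noncomputable def sincAux (y : ℝ) : ℝ := Real.sin (π * y) / (π * y)

lemma contDiffAt_sincAux (n : ℕ) {x : ℝ} (hx : x ≠ 0) : ContDiffAt ℝ n sincAux x :=
  ((Real.contDiff_sin.comp (contDiff_const.mul contDiff_id)).contDiffAt).div
    ((contDiff_const.mul contDiff_id).contDiffAt) (mul_ne_zero Real.pi_ne_zero hx)

lemma hasDerivAt_iteratedDeriv_of_contDiffAt {f : ℝ → ℝ} {x : ℝ} {n : ℕ}
    (hf : ContDiffAt ℝ (n + 1 : ℕ) f x) :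
    HasDerivAt (iteratedDeriv n f) (iteratedDeriv (n + 1) f x) x := by
  obtain ⟨u, hu, hcd⟩ := hf.contDiffOn (le_refl _) (by simp)
  obtain ⟨v, hvu, hv, hxv⟩ := mem_nhds_iff.mp hu
  have hcdv : ContDiffOn ℝ (n + 1 : ℕ) f v := hcd.mono hvu
  have hdiff : DifferentiableWithinAt ℝ (iteratedDerivWithin n f v) v x :=
    hcdv.differentiableOn_iteratedDerivWithin (by exact_mod_cast Nat.lt_succ_self n)
      hv.uniqueDiffOn x hxv
  have h1 : iteratedDerivWithin n f v =ᶠ[𝓝 x] iteratedDeriv n f := by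
    filter_upwards [hv.mem_nhds hxv] with y hy
    rw [iteratedDerivWithin_eq_iteratedFDerivWithin, iteratedDeriv_eq_iteratedFDeriv,
      iteratedFDerivWithin_of_isOpen n hv hy]
  have h2 : DifferentiableAt ℝ (iteratedDeriv n f) x :=
    (Filter.EventuallyEq.differentiableAt_iff h1).mp (hdiff.differentiableAt (hv.mem_nhds hxv))
  have := h2.hasDerivAt
  rwa [iteratedDeriv_succ]

lemma mul_sincAux_eq : (fun y : ℝ => y * sincAux y) = fun y => Real.sin (π * y) / π := by
  funext y
  rcases eq_or_ne y 0 with rfl | hy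
  · simp [sincAux]
  · have : π * y ≠ 0 := mul_ne_zero Real.pi_ne_zero hy
    rw [sincAux, mul_div_assoc', div_eq_div_iff this Real.pi_ne_zero]
    ring

/-- Leibniz rule for `x * sincAux x` away from 0. -/
lemma leibniz_sincAux (n : ℕ) : ∀ x : ℝ, x ≠ 0 →
    iteratedDeriv (n + 1) (fun y => Real.sin (π * y) / π) x =
      x * iteratedDeriv (n + 1) sincAux x + (n + 1 : ℝ) * iteratedDeriv n sincAux x := by
  induction n with
  | zero =>
    intro x hx
    have hg : HasDerivAt sincAux (iteratedDeriv 1 sincAux x) x := by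
      simpa using hasDerivAt_iteratedDeriv_of_contDiffAt (n := 0) (contDiffAt_sincAux 1 hx)
    have h := (hasDerivAt_id x).mul hg
    rw [iteratedDeriv_one, ← mul_sincAux_eq]
    have := h.deriv
    simp only [id_eq, one_mul] at this
    rw [show (fun y => y * sincAux y) = id * sincAux from rfl, this, iteratedDeriv_zero]
    ring
  | succ n IH =>
    intro x hx
    have heq : iteratedDeriv (n + 1) (fun y => Real.sin (π * y) / π) =ᶠ[𝓝 x]
        fun y => y * iteratedDeriv (n + 1) sincAux y + (n + 1 : ℝ) * iteratedDeriv n sincAux y := by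
      filter_upwards [isOpen_compl_singleton.mem_nhds hx] with y hy
      exact IH y hy
    have hS1 : HasDerivAt (iteratedDeriv (n + 1) sincAux)
        (iteratedDeriv (n + 2) sincAux x) x :=
      hasDerivAt_iteratedDeriv_of_contDiffAt (contDiffAt_sincAux (n + 2) hx)
    have hS0 : HasDerivAt (iteratedDeriv n sincAux)
        (iteratedDeriv (n + 1) sincAux x) x :=
      hasDerivAt_iteratedDeriv_of_contDiffAt (contDiffAt_sincAux (n + 1) hx)
    have h : HasDerivAt
        (fun y => y * iteratedDeriv (n + 1) sincAux y + (n + 1 : ℝ) * iteratedDeriv n sincAux y)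
        (1 * iteratedDeriv (n + 1) sincAux x + x * iteratedDeriv (n + 2) sincAux x
          + (n + 1 : ℝ) * iteratedDeriv (n + 1) sincAux x) x :=
      ((hasDerivAt_id x).mul hS1).add (hS0.const_mul _)
    rw [iteratedDeriv_succ, heq.deriv_eq, h.deriv]
    push_cast
    ring

lemma iteratedDeriv_sin_odd (j : ℕ) (a : ℝ) :
    iteratedDeriv (2 * j + 1) Real.sin a = (-1 : ℝ) ^ j * Real.cos a := by
  induction j generalizing a with
  | zero => simp [iteratedDeriv_one, Real.deriv_sin]
  | succ j IH =>
    have h2 : 2 * (j + 1) + 1 = (2 * j + 1) + 1 + 1 := by ring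
    rw [h2, iteratedDeriv_succ', iteratedDeriv_succ', Real.deriv_sin, Real.deriv_cos',
      iteratedDeriv_fun_neg, IH]
    ring

theorem sinc_deriv_relation_half (k : ℤ) (m : ℕ) (hm : 1 ≤ m) :
    (2 * (m : ℝ) - 1) * iteratedDeriv (2 * m - 2) _root_.sinc (1/2 - k) =
      ((k : ℝ) - 1/2) * iteratedDeriv (2 * m - 1) _root_.sinc (1/2 - k) := by
  obtain ⟨j, rfl⟩ : ∃ j, m = j + 1 := ⟨m - 1, (Nat.succ_pred_eq_of_pos hm).symm⟩
  set x₀ : ℝ := 1/2 - (k : ℝ) with hx₀def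
  have hx₀ : x₀ ≠ 0 := by
    intro h
    have h2 : ((2 * k : ℤ) : ℝ) = ((1 : ℤ) : ℝ) := by push_cast; rw [hx₀def] at h; linarith
    have := Int.cast_injective h2
    omega
  -- sinc agrees with sincAux near x₀
  have heq : _root_.sinc =ᶠ[𝓝 x₀] sincAux := by
    filter_upwards [isOpen_compl_singleton.mem_nhds hx₀] with y hy
    simp [_root_.sinc, sincAux, Set.mem_compl_iff, Set.mem_singleton_iff.not.mp hy]
  have e1 : 2 * (j + 1) - 2 = 2 * j := by omega
  have e2 : 2 * (j + 1) - 1 = 2 * j + 1 := by omega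
  rw [e1, e2, heq.iteratedDeriv_eq, heq.iteratedDeriv_eq]
  -- value of the (2j+1)-th derivative of sin(πx)/π at x₀ is 0
  have hzero : iteratedDeriv (2 * j + 1) (fun y => Real.sin (π * y) / π) x₀ = 0 := by
    have hconst : (fun y : ℝ => Real.sin (π * y) / π) =
        fun y => (π)⁻¹ * Real.sin (π * y) := by
      funext y; rw [div_eq_inv_mul]
    have hsmul : iteratedDeriv (2 * j + 1) (fun y => (π)⁻¹ * Real.sin (π * y)) x₀ =
        (π)⁻¹ * iteratedDeriv (2 * j + 1) (fun y => Real.sin (π * y)) x₀ := by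
      rw [← iteratedDerivWithin_univ, ← iteratedDerivWithin_univ]
      exact iteratedDerivWithin_const_mul (Set.mem_univ x₀) uniqueDiffOn_univ _
        ((Real.contDiff_sin.comp (contDiff_const.mul contDiff_id)).contDiffWithinAt)
    have hcm : iteratedDeriv (2 * j + 1) (fun y => Real.sin (π * y)) =
        fun y => π ^ (2 * j + 1) * iteratedDeriv (2 * j + 1) Real.sin (π * y) :=
      iteratedDeriv_comp_const_mul Real.contDiff_sin π
    have hcos : Real.cos (π * x₀) = 0 := by
      have : π * x₀ = π / 2 - (k : ℝ) * π := by rw [hx₀def]; ring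
      rw [this, Real.cos_pi_div_two_sub, Real.sin_int_mul_pi]
    rw [hconst, hsmul, hcm]
    simp [iteratedDeriv_sin_odd, hcos]
  have hleib := leibniz_sincAux (2 * j) x₀ hx₀
  rw [hzero] at hleib
  have hcast : ((2 * j : ℕ) : ℝ) + 1 = 2 * ((j : ℝ) + 1) - 1 := by push_cast; ring
  push_cast
  rw [hx₀def] at hleib
  push_cast at hleib
  linarith
end

section
/- For every nonzero integer k and m ∈ ℕ, 2m·sinc^{(2m-1)}(-k) = k·sinc^{(2m)}(-k). -/
open Real

noncomputable def normSinc (x : ℝ) : ℝ := if x = 0 then 1 else Real.sin (π * x) / (π * x)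

namespace SincAux

noncomputable def g (x : ℝ) : ℝ := Real.sin (π * x) / (π * x)
noncomputable def F (x : ℝ) : ℝ := Real.sin (π * x) / π

lemma hF_eq : F = fun y => y * g y := by
  funext y
  by_cases hy : y = 0
  · simp [F, g, hy]
  · simp only [F, g]
    field_simp

lemma hg_contDiffOn : ContDiffOn ℝ (⊤ : ℕ∞) g {x : ℝ | x ≠ 0} := by
  apply ContDiffOn.div
  · exact (Real.contDiff_sin.comp (contDiff_const.mul contDiff_id)).contDiffOn
  · exact (contDiff_const.mul contDiff_id).contDiffOn
  · intro x hx
    exact mul_ne_zero Real.pi_ne_zero hx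

lemma hs_open : IsOpen {x : ℝ | x ≠ 0} := isOpen_ne

lemma hdiff (n : ℕ) {x : ℝ} (hx : x ≠ 0) : DifferentiableAt ℝ (iteratedDeriv n g) x := by
  have h1 : DifferentiableOn ℝ (iteratedDerivWithin n g {x : ℝ | x ≠ 0}) {x : ℝ | x ≠ 0} :=
    hg_contDiffOn.differentiableOn_iteratedDerivWithin
      (by exact_mod_cast ENat.coe_lt_top n) hs_open.uniqueDiffOn
  have h2 : ∀ y ∈ {x : ℝ | x ≠ 0},
      iteratedDerivWithin n g {x : ℝ | x ≠ 0} y = iteratedDeriv n g y := by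
    intro y hy
    rw [iteratedDerivWithin_eq_iteratedFDerivWithin, iteratedDeriv_eq_iteratedFDeriv,
      iteratedFDerivWithin_of_isOpen n hs_open hy]
  have := (h1 x hx).differentiableAt (hs_open.mem_nhds hx)
  exact this.congr_of_eventuallyEq <|
    Filter.eventuallyEq_of_mem (hs_open.mem_nhds hx) (fun y hy => (h2 y hy).symm)

lemma sinc_eq_g : Set.EqOn normSinc g {x : ℝ | x ≠ 0} := by
  intro y hy
  simp only [normSinc, g, if_neg hy]

lemma lemB (n : ℕ) : ∀ x : ℝ, x ≠ 0 →
    iteratedDeriv (n + 1) F x = x * iteratedDeriv (n + 1) g x + (n + 1) * iteratedDeriv n g x := by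
  induction n with
  | zero =>
    intro x hx
    rw [iteratedDeriv_one, hF_eq]
    rw [deriv_fun_mul differentiableAt_fun_id (by simpa [iteratedDeriv_zero] using hdiff 0 hx)]
    simp [iteratedDeriv_one, iteratedDeriv_zero]
    ring
  | succ n ih =>
    intro x hx
    rw [iteratedDeriv_succ]
    have hev : deriv (iteratedDeriv (n + 1) F) x =
        deriv (fun y => y * iteratedDeriv (n + 1) g y + (n + 1) * iteratedDeriv n g y) x :=
      Filter.EventuallyEq.deriv_eq <|
        Filter.eventuallyEq_of_mem (hs_open.mem_nhds hx) (fun y hy => ih y hy)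
    rw [hev, deriv_fun_add (differentiableAt_fun_id.fun_mul (hdiff (n + 1) hx))
        ((differentiableAt_const _).fun_mul (hdiff n hx)),
      deriv_fun_mul differentiableAt_fun_id (hdiff (n + 1) hx),
      deriv_const_mul _ (hdiff n hx), ← iteratedDeriv_succ, ← iteratedDeriv_succ]
    push_cast
    simp
    ring

lemma hsin (x : ℝ) : HasDerivAt (fun y => Real.sin (π * y)) (π * Real.cos (π * x)) x := by
  simpa [Function.comp_def, mul_comm] using
    (Real.hasDerivAt_sin (π * x)).comp x ((hasDerivAt_id x).const_mul π)

lemma hcos (x : ℝ) : HasDerivAt (fun y => Real.cos (π * y)) (-(π * Real.sin (π * x))) x := by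
  simpa [Function.comp_def, mul_comm] using
    (Real.hasDerivAt_cos (π * x)).comp x ((hasDerivAt_id x).const_mul π)

lemma lemC (j : ℕ) :
    (iteratedDeriv (2 * j) F = fun x => (-1 : ℝ) ^ j * π ^ (2 * j) * (Real.sin (π * x) / π)) ∧
    (iteratedDeriv (2 * j + 1) F = fun x => (-1 : ℝ) ^ j * π ^ (2 * j) * Real.cos (π * x)) := by
  induction j with
  | zero =>
    constructor
    · funext x; simp [F]
    · rw [iteratedDeriv_one]
      funext x
      unfold F
      rw [deriv_div_const, (hsin x).deriv]
      field_simp [Real.pi_ne_zero]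
      simp
  | succ j ih =>
    have h2 : 2 * (j + 1) = (2 * j + 1) + 1 := by ring
    have heven : iteratedDeriv (2 * (j + 1)) F =
        fun x => (-1 : ℝ) ^ (j + 1) * π ^ (2 * (j + 1)) * (Real.sin (π * x) / π) := by
      rw [h2, iteratedDeriv_succ, ih.2]
      funext x
      rw [deriv_const_mul _ (hcos x).differentiableAt, (hcos x).deriv]
      field_simp [Real.pi_ne_zero]
      ring
    refine ⟨heven, ?_⟩
    rw [iteratedDeriv_succ, heven]
    funext x
    have hd : DifferentiableAt ℝ (fun y => Real.sin (π * y) / π) x :=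
      (hsin x).differentiableAt.div_const π
    rw [deriv_const_mul _ hd, deriv_div_const, (hsin x).deriv]
    field_simp [Real.pi_ne_zero]

end SincAux

theorem sinc_deriv_relation_int (k : ℤ) (hk : k ≠ 0) (m : ℕ) (hm : 1 ≤ m) :
    (2 * (m : ℝ)) * iteratedDeriv (2 * m - 1) normSinc (-k) =
      (k : ℝ) * iteratedDeriv (2 * m) normSinc (-k) := by
  open SincAux in
  obtain ⟨m', rfl⟩ : ∃ m', m = m' + 1 := ⟨m - 1, (Nat.succ_pred_eq_of_pos hm).symm⟩
  have hx : (-k : ℝ) ≠ 0 := by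
    simpa using fun h => hk (by exact_mod_cast h)
  have hxs : (-k : ℝ) ∈ {x : ℝ | x ≠ 0} := hx
  have hB := lemB (2 * m' + 1) (-k) hx
  have hC := (lemC (m' + 1)).1
  have hsk : Real.sin (π * ((k : ℝ))) = 0 := by
    rw [mul_comm]
    exact_mod_cast Real.sin_int_mul_pi k
  have hFval : iteratedDeriv (2 * (m' + 1)) F (-(k : ℝ)) = 0 := by
    rw [hC]
    simp [mul_neg, Real.sin_neg, hsk]
  have hn1 : 2 * m' + 1 + 1 = 2 * (m' + 1) := by ring
  have hn2 : 2 * (m' + 1) - 1 = 2 * m' + 1 := by omega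
  rw [hn1] at hB
  rw [hFval] at hB
  have hg1 := sinc_eq_g.iteratedDeriv_of_isOpen hs_open (2 * (m' + 1)) hxs
  have hg2 := sinc_eq_g.iteratedDeriv_of_isOpen hs_open (2 * m' + 1) hxs
  rw [hn2, hg1, hg2]
  push_cast at hB ⊢
  linarith [hB]
end

section
/- Let T(t) be the right-translation semigroup on L²(0,∞): (T(t)f)(x) = f(x - t) for x ≥ t and 0 for 0 ≤ x < t, with generator D. If f ∈ L²(0,∞) satisfies ‖D^k f‖ ≤ C σ^k for all k ∈ ℕ and some constants C, σ > 0 (so that for each g ∈ L²(0,∞) the function t ↦ ⟨T(t)f, g⟩ is real-analytic on [0,∞)), then f = 0. -/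
set_option maxHeartbeats 1000000
open MeasureTheory Set intervalIntegral

lemma decay_aux {h : ℕ → ℝ → ℂ} {a M s : ℝ} (ha : 0 ≤ a) (hM : 0 ≤ M) (hs : 0 ≤ s)
    (hd : ∀ k, ∀ t ∈ Ici (0:ℝ), HasDerivWithinAt (h k) (h (k+1) t) (Ici 0) t)
    (hb : ∀ k, ∀ t ∈ Icc 0 a, ‖h k t‖ ≤ M * s ^ k)
    (hz : ∀ k, h k a = 0) : h 0 0 = 0 := by
  have hcont : ∀ k, ContinuousOn (h k) (Ici 0) := fun k =>
    fun x hx => ((hd k x hx).continuousWithinAt)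
  -- main estimate
  have key : ∀ n j, j ≤ n → ∀ t ∈ Icc (0:ℝ) a,
      ‖h (n - j) t‖ ≤ M * s ^ n * (a - t) ^ j / j.factorial := by
    intro n j
    induction j with
    | zero =>
      intro _ t ht
      simpa using hb n t ht
    | succ j ih =>
      intro hjn t ht
      have hj : j ≤ n := Nat.le_of_succ_le hjn
      have hk1 : n - (j+1) + 1 = n - j := by omega
      have hta : t ≤ a := ht.2
      have ht0 : 0 ≤ t := ht.1
      have hIcc : Icc t a ⊆ Ici (0:ℝ) := fun x hx => le_trans ht0 hx.1
      have hcont' : ∀ m, ContinuousOn (h m) (Icc t a) := fun m => (hcont m).mono hIcc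
      have hftc : ∫ x in t..a, h (n - j) x = h (n - (j+1)) a - h (n - (j+1)) t := by
        rw [← hk1]
        apply integral_eq_sub_of_hasDeriv_right_of_le hta (hcont' _)
        · intro x hx
          have hx0 : 0 < x := lt_of_le_of_lt ht0 hx.1
          exact (((hd _ x hx0.le).hasDerivAt (Ici_mem_nhds hx0)).hasDerivWithinAt)
        · rw [hk1]
          exact (hcont' _).intervalIntegrable_of_Icc hta
      have hval : h (n - (j+1)) t = -∫ x in t..a, h (n - j) x := by
        rw [hftc, hz]; ring
      rw [hval, norm_neg]
      have hbnd : ‖∫ x in t..a, h (n - j) x‖ ≤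
          |∫ x in t..a, M * s ^ n * (a - x) ^ j / j.factorial| := by
        apply intervalIntegral.norm_integral_le_abs_of_norm_le
        · filter_upwards [ae_restrict_mem measurableSet_uIoc] with x hx
          have hx' : x ∈ Icc t a := by
            rw [uIoc_of_le hta] at hx; exact ⟨hx.1.le, hx.2⟩
          exact ih hj x ⟨le_trans ht0 hx'.1, hx'.2⟩
        · apply ContinuousOn.intervalIntegrable_of_Icc hta
          fun_prop
      have habs : |∫ x in t..a, M * s ^ n * (a - x) ^ j / j.factorial|
          = ∫ x in t..a, M * s ^ n * (a - x) ^ j / j.factorial := by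
        apply abs_of_nonneg
        apply intervalIntegral.integral_nonneg hta
        intro x hx
        have : 0 ≤ a - x := sub_nonneg.mpr hx.2
        positivity
      rw [habs] at hbnd
      refine hbnd.trans (le_of_eq ?_)
      have : (∫ x in t..a, M * s ^ n * (a - x) ^ j / j.factorial)
          = M * s ^ n / j.factorial * ∫ x in t..a, (a - x) ^ j := by
        rw [← intervalIntegral.integral_const_mul]
        congr 1; ext x; ring
      rw [this, intervalIntegral.integral_comp_sub_left (fun u => u ^ j) a]
      rw [sub_self, integral_pow, zero_pow (by omega), sub_zero]
      have hfac : (((j+1).factorial : ℝ)) = (j+1) * j.factorial := by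
        rw [Nat.factorial_succ]; push_cast; ring
      rw [hfac, mul_comm ((j:ℝ)+1) ((j.factorial:ℝ)), ← div_div]
      ring
  -- conclude
  have hlim : Filter.Tendsto (fun n : ℕ => M * (s * a) ^ n / n.factorial)
      Filter.atTop (nhds 0) := by
    have := FloorSemiring.tendsto_pow_div_factorial_atTop (K := ℝ) (s * a)
    have h2 := this.const_mul M
    simpa [mul_div_assoc] using h2
  have hle : ∀ n : ℕ, ‖h 0 0‖ ≤ M * (s * a) ^ n / n.factorial := by
    intro n
    have := key n n le_rfl 0 ⟨le_rfl, ha⟩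
    simp only [Nat.sub_self, sub_zero] at this
    calc ‖h 0 0‖ ≤ M * s ^ n * a ^ n / n.factorial := this
      _ = M * (s * a) ^ n / n.factorial := by rw [mul_pow]; ring
  have : ‖h 0 0‖ ≤ 0 := ge_of_tendsto' hlim hle
  simpa using le_antisymm this (norm_nonneg _)


lemma norm_translate (t : ℝ) (ht : 0 ≤ t) (g : Lp ℂ 2 ((volume : Measure ℝ).restrict (Set.Ioi 0)))
    (Ttg : Lp ℂ 2 ((volume : Measure ℝ).restrict (Set.Ioi 0)))
    (h : ∀ᵐ x ∂((volume : Measure ℝ).restrict (Set.Ioi 0)),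
      (Ttg : ℝ → ℂ) x = if t ≤ x then (g : ℝ → ℂ) (x - t) else 0) :
    ‖Ttg‖ = ‖g‖ := by
  have h1 : eLpNorm (Ttg : ℝ → ℂ) 2 ((volume : Measure ℝ).restrict (Set.Ioi 0))
      = eLpNorm (fun x => if t ≤ x then (g : ℝ → ℂ) (x - t) else 0) 2 ((volume : Measure ℝ).restrict (Set.Ioi 0)) :=
    eLpNorm_congr_ae h
  have h2 : (fun x : ℝ => if t ≤ x then (g : ℝ → ℂ) (x - t) else 0)
      = (Set.Ici t).indicator (fun x => (g : ℝ → ℂ) (x - t)) := by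
    funext x; simp [Set.indicator_apply, Set.mem_Ici]
  have h3 : eLpNorm ((Set.Ici t).indicator (fun x => (g : ℝ → ℂ) (x - t))) 2 ((volume : Measure ℝ).restrict (Set.Ioi 0))
      = eLpNorm (fun x => (g : ℝ → ℂ) (x - t)) 2 (((volume : Measure ℝ).restrict (Set.Ioi 0)).restrict (Set.Ici t)) :=
    eLpNorm_indicator_eq_eLpNorm_restrict measurableSet_Ici
  have h4 : ((volume : Measure ℝ).restrict (Set.Ioi 0)).restrict (Set.Ici t) = (volume : Measure ℝ).restrict (Set.Ioi t) := by
    rw [Measure.restrict_restrict measurableSet_Ici]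
    apply Measure.restrict_congr_set
    rw [Filter.eventuallyEq_set]
    have : {x : ℝ | ¬ ((x ∈ Set.Ici t ∩ Set.Ioi 0) ↔ x ∈ Set.Ioi t)} ⊆ {t} := by
      intro x hx
      simp only [Set.mem_setOf_eq, Set.mem_inter_iff, Set.mem_Ici, Set.mem_Ioi] at hx
      simp only [Set.mem_singleton_iff]
      by_contra hne
      rcases lt_or_gt_of_ne hne with h' | h'
      · exact hx ⟨fun ⟨h1, _⟩ => lt_of_le_of_ne h1 (Ne.symm hne), fun h2 => absurd h2 (not_lt.mpr h'.le)⟩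
      · exact hx ⟨fun _ => h', fun h2 => ⟨h2.le, lt_of_le_of_lt ht h2⟩⟩
    have hnull : (volume : Measure ℝ) {x : ℝ | ¬ ((x ∈ Set.Ici t ∩ Set.Ioi 0) ↔ x ∈ Set.Ioi t)} = 0 :=
      measure_mono_null this (Real.volume_singleton)
    exact (MeasureTheory.ae_iff).mpr hnull
  have mp : MeasurePreserving (fun x : ℝ => x - t)
      ((volume : Measure ℝ).restrict (Set.Ioi t)) ((volume : Measure ℝ).restrict (Set.Ioi 0)) := by
    have base : MeasurePreserving (fun x : ℝ => x - t) (volume : Measure ℝ) volume :=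
      measurePreserving_sub_right volume t
    have hpre : (fun x : ℝ => x - t) ⁻¹' (Set.Ioi 0) = Set.Ioi t := by
      ext x; simp [Set.mem_Ioi, sub_pos]
    have := base.restrict_preimage (s := Set.Ioi 0) measurableSet_Ioi
    rwa [hpre] at this
  have h5 : eLpNorm (fun x => (g : ℝ → ℂ) (x - t)) 2 ((volume : Measure ℝ).restrict (Set.Ioi t))
      = eLpNorm (g : ℝ → ℂ) 2 ((volume : Measure ℝ).restrict (Set.Ioi 0)) :=
    eLpNorm_comp_measurePreserving (Lp.aestronglyMeasurable g) mp
  rw [Lp.norm_def, Lp.norm_def, h1, h2, h3, h4, h5]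


theorem translation_semigroup_no_bernstein_vectors
    (T : ℝ → Lp ℂ 2 ((volume : Measure ℝ).restrict (Set.Ioi 0)) →
      Lp ℂ 2 ((volume : Measure ℝ).restrict (Set.Ioi 0)))
    (hT : ∀ t : ℝ, 0 ≤ t → ∀ g : Lp ℂ 2 ((volume : Measure ℝ).restrict (Set.Ioi 0)),
      ∀ᵐ x ∂((volume : Measure ℝ).restrict (Set.Ioi 0)),
        (T t g : ℝ → ℂ) x = if t ≤ x then (g : ℝ → ℂ) (x - t) else 0)
    (f : Lp ℂ 2 ((volume : Measure ℝ).restrict (Set.Ioi 0)))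
    (F : ℕ → Lp ℂ 2 ((volume : Measure ℝ).restrict (Set.Ioi 0)))
    (hF0 : F 0 = f)
    (hFD : ∀ (k : ℕ) (t : ℝ), 0 ≤ t →
      HasDerivWithinAt (fun s : ℝ => T s (F k)) (T t (F (k + 1))) (Set.Ici 0) t)
    (C σ : ℝ) (hC : 0 < C) (hσ : 0 < σ)
    (hbound : ∀ k : ℕ, ‖F k‖ ≤ C * σ ^ k) :
    f = 0 := by
  classical
  have hnorm : ∀ t : ℝ, 0 ≤ t → ∀ g, ‖T t g‖ = ‖g‖ := fun t ht g =>
    norm_translate t ht g (T t g) (hT t ht g)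
  have hT0 : ∀ g, T 0 g = g := by
    intro g
    apply Lp.ext
    filter_upwards [hT 0 le_rfl g, ae_restrict_mem measurableSet_Ioi] with x hx hx0
    rw [hx, if_pos hx0.le, sub_zero]
  have hfzero : ∀ n : ℕ,
      (Set.Ioc (0:ℝ) (n:ℝ)).indicator (fun x => ‖(f : ℝ → ℂ) x‖ ^ 2)
        =ᵐ[(volume : Measure ℝ).restrict (Set.Ioi 0)] 0 := by
    intro n
    set a : ℝ := (n : ℝ) with hadef
    have ha : (0:ℝ) ≤ a := Nat.cast_nonneg n
    have gmem : MemLp ((Set.Ioc 0 a).indicator (f : ℝ → ℂ)) 2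
        ((volume : Measure ℝ).restrict (Set.Ioi 0)) :=
      (Lp.memLp f).indicator measurableSet_Ioc
    set g := gmem.toLp _ with hgdef
    have hgco : (g : ℝ → ℂ) =ᵐ[(volume : Measure ℝ).restrict (Set.Ioi 0)]
        (Set.Ioc 0 a).indicator (f : ℝ → ℂ) := MemLp.coeFn_toLp _
    set h : ℕ → ℝ → ℂ := fun k t => (innerSL ℂ g) (T t (F k)) with hhdef
    have hd : ∀ k, ∀ t ∈ Ici (0:ℝ), HasDerivWithinAt (h k) (h (k+1) t) (Ici 0) t := by
      intro k t ht
      have := (((innerSL ℂ g).restrictScalars ℝ).hasFDerivAt (x := T t (F k))).comp_hasDerivWithinAt t (hFD k t ht)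
      exact this
    have hb : ∀ k, ∀ t ∈ Icc (0:ℝ) a, ‖h k t‖ ≤ (‖g‖ * C) * σ ^ k := by
      intro k t ht
      calc ‖h k t‖ = ‖inner (𝕜 := ℂ) g (T t (F k))‖ := rfl
        _ ≤ ‖g‖ * ‖T t (F k)‖ := norm_inner_le_norm _ _
        _ = ‖g‖ * ‖F k‖ := by rw [hnorm t ht.1 (F k)]
        _ ≤ ‖g‖ * (C * σ ^ k) := mul_le_mul_of_nonneg_left (hbound k) (norm_nonneg g)
        _ = (‖g‖ * C) * σ ^ k := by ring
    have hne : ∀ᵐ x ∂((volume : Measure ℝ).restrict (Set.Ioi 0)), x ≠ a := by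
      refine (MeasureTheory.ae_iff).mpr ?_
      simp only [ne_eq, not_not]
      have hsub : {x : ℝ | x = a} ⊆ {a} := fun x hx => hx
      refine measure_mono_null hsub ?_
      refine le_antisymm (le_trans (Measure.restrict_apply_le _ _) ?_) (zero_le)
      simp [Real.volume_singleton]
    have hz : ∀ k, h k a = 0 := by
      intro k
      show inner (𝕜 := ℂ) g (T a (F k)) = 0
      rw [MeasureTheory.L2.inner_def]
      apply integral_eq_zero_of_ae
      filter_upwards [hT a ha (F k), hgco, hne] with x hx hgx hxa
      rw [RCLike.inner_apply, hgx, hx]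
      by_cases hax : a ≤ x
      · rw [if_pos hax]
        have hnm : x ∉ Set.Ioc 0 a := fun hmem => hxa (le_antisymm hmem.2 hax)
        rw [Set.indicator_of_notMem hnm]
        simp
      · rw [if_neg hax]
        simp
    have h00 : h 0 0 = 0 :=
      decay_aux ha (mul_nonneg (norm_nonneg g) hC.le) hσ.le hd hb hz
    have hinnf : inner (𝕜 := ℂ) g f = 0 := by
      have : h 0 0 = inner (𝕜 := ℂ) g f := by
        rw [hhdef]
        simp only [hF0, hT0 f, innerSL_apply_apply]
      rw [← this, h00]
    have hint : inner (𝕜 := ℂ) g f =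
        ((∫ x, (Set.Ioc 0 a).indicator (fun x => ‖(f : ℝ → ℂ) x‖ ^ 2) x
          ∂((volume : Measure ℝ).restrict (Set.Ioi 0)) : ℝ) : ℂ) := by
      calc inner (𝕜 := ℂ) g f
          = ∫ x, inner (𝕜 := ℂ) ((g : ℝ → ℂ) x) ((f : ℝ → ℂ) x)
              ∂((volume : Measure ℝ).restrict (Set.Ioi 0)) :=
            MeasureTheory.L2.inner_def g f
        _ = ∫ x, (((Set.Ioc 0 a).indicator (fun x => ‖(f : ℝ → ℂ) x‖ ^ 2) x : ℝ) : ℂ)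
              ∂((volume : Measure ℝ).restrict (Set.Ioi 0)) := by
            apply MeasureTheory.integral_congr_ae
            filter_upwards [hgco] with x hgx
            rw [RCLike.inner_apply, hgx]
            by_cases hx : x ∈ Set.Ioc (0:ℝ) a
            · rw [Set.indicator_of_mem hx, Set.indicator_of_mem hx]
              exact RCLike.mul_conj _ |>.trans (by norm_cast)
            · rw [Set.indicator_of_notMem hx, Set.indicator_of_notMem hx]
              simp
        _ = _ := _root_.integral_ofReal
    have hir : (∫ x, (Set.Ioc 0 a).indicator (fun x => ‖(f : ℝ → ℂ) x‖ ^ 2) x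
        ∂((volume : Measure ℝ).restrict (Set.Ioi 0))) = 0 := by
      have := hint.symm.trans hinnf
      exact_mod_cast this
    have hinteg : Integrable ((Set.Ioc 0 a).indicator (fun x => ‖(f : ℝ → ℂ) x‖ ^ 2))
        ((volume : Measure ℝ).restrict (Set.Ioi 0)) := by
      have hsq : Integrable (fun x => ‖(f : ℝ → ℂ) x‖ ^ 2)
          ((volume : Measure ℝ).restrict (Set.Ioi 0)) :=
        (memLp_two_iff_integrable_sq_norm (Lp.aestronglyMeasurable f)).mp (Lp.memLp f)
      exact hsq.indicator measurableSet_Ioc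
    have hnn : 0 ≤ᵐ[(volume : Measure ℝ).restrict (Set.Ioi 0)]
        (Set.Ioc 0 a).indicator (fun x => ‖(f : ℝ → ℂ) x‖ ^ 2) := by
      filter_upwards with x
      exact Set.indicator_nonneg (fun y _ => by positivity) x
    rw [MeasureTheory.integral_eq_zero_iff_of_nonneg_ae hnn hinteg] at hir
    exact hir
  -- combine over n
  have hae : (f : ℝ → ℂ) =ᵐ[(volume : Measure ℝ).restrict (Set.Ioi 0)] 0 := by
    have hall : ∀ᵐ x ∂((volume : Measure ℝ).restrict (Set.Ioi 0)), ∀ n : ℕ,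
        (Set.Ioc (0:ℝ) (n:ℝ)).indicator (fun x => ‖(f : ℝ → ℂ) x‖ ^ 2) x = 0 :=
      (MeasureTheory.ae_all_iff).mpr (fun n => hfzero n)
    filter_upwards [hall, ae_restrict_mem measurableSet_Ioi] with x hx hx0
    obtain ⟨n, hn⟩ := exists_nat_ge x
    have hmem : x ∈ Set.Ioc (0:ℝ) (n:ℝ) := ⟨hx0, hn⟩
    have := hx n
    rw [Set.indicator_of_mem hmem] at this
    have : ‖(f : ℝ → ℂ) x‖ = 0 := by
      have := sq_eq_zero_iff.mp this
      exact this
    simpa using norm_eq_zero.mp this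
  apply Lp.ext
  exact hae.trans (Lp.coeFn_zero ℂ 2 _).symm
end
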